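/- Let G = G(r,1,n) act on ℂ^n, with parameters c_0 (for transposition-type reflections) and c_1, …, c_{r−1} (for diagonal reflections ζ_k^l), and set d_j = Σ_{1≤l≤r−1} ζ^{lj} c_l for 0 ≤ j ≤ r−1 where ζ = e^{2πi/r}. Then for an r-tuple of partitions λ• with n boxes total, the scalar c_{λ•} by which the central element Σ_{r∈R} c_r(1−r) acts on S^{λ•} equals r·C(n,2)·c_0 + n·d_0 − Σ_{b∈λ•}(ct(b)·r·c_0 + d_{β(b)}), where ct(b) is the content of box b and β(b) = k if b lies in the k-th component λ^k. -/

import Mathlib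

/-- `l` is a partition of `n`: a weakly decreasing list of positive integers with sum `n`. -/
def PaperIsPartition (l : List ℕ) (n : ℕ) : Prop :=
  l.Pairwise (· ≥ ·) ∧ (∀ x ∈ l, 0 < x) ∧ l.sum = n

/-- Sum of contents `i - j` over all boxes (row `j`, column `i`, 0-indexed). -/
def contentSum (l : List ℕ) : ℤ :=
  ∑ i ∈ Finset.range l.length, ∑ j ∈ Finset.range (l.getD i 0), ((j : ℤ) - (i : ℤ))

/-- for `G = G(r,1,n)` with parameters `c₀` (transposition-type
reflections) and `c_1, …, c_{r−1}` (diagonal reflections `ζ_k^l`), setting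
`d_j = Σ_{1≤l≤r−1} ζ^{lj} c_l` with `ζ = e^{2πi/r}`, the scalar `c_{λ•}` by which the
central element `Σ_{r∈R} c_r (1−r)` acts on the irreducible module `S^{λ•}` indexed by an
`r`-tuple of partitions `λ•` with `n` boxes equals
`r·C(n,2)·c₀ + n·d₀ − Σ_{b∈λ•} (ct(b)·r·c₀ + d_{β(b)})`.

The module `S^{λ•}` and the central element are encoded through Young's orthonormal form
(the context): `v` is a (nonzero) basis vector `v_T` of `S^{λ•}` for a standard tableau
`T` recorded by `cont j = ct(T⁻¹(j+1))` and `beta j = β(T⁻¹(j+1))`; the operators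
`phi j = φ_{j+1}` and `zmat j = ζ_{j+1}` act on `v` as in Young's form (`hphi`, `hzeta`);
and `Z` is the expression of the central element `Σ_{r∈R} c_r(1−r)` in terms of the
`φ_j` and `ζ_j` (`hZ`). -/
theorem central_character_Gr1n (r n : ℕ) (hr : 0 < r)
    (lam : ℕ → List ℕ) (sz : ℕ → ℕ)
    (hpart : ∀ k < r, PaperIsPartition (lam k) (sz k))
    (hout : ∀ k, r ≤ k → lam k = [])
    (hn : ∑ k ∈ Finset.range r, sz k = n)
    (c0 : ℂ) (c : ℕ → ℂ)
    (ζ : ℂ) (hζ : ζ = Complex.exp (2 * Real.pi * Complex.I / r))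
    (d : ℕ → ℂ) (hd : ∀ j, d j = ∑ l ∈ Finset.Ico 1 r, ζ ^ (l * j) * c l)
    {W : Type*} [AddCommGroup W] [Module ℂ W]
    (v : W) (hv : v ≠ 0)
    (Z : Module.End ℂ W) (phi zmat : Fin n → Module.End ℂ W)
    (cont : Fin n → ℤ) (beta : Fin n → ℕ)
    (hbeta : ∀ j, beta j < r)
    (hZ : Z = (c0 * r * (n.choose 2 : ℂ)) • (1 : Module.End ℂ W)
        - c0 • ∑ j, phi j
        + ∑ j, ∑ l ∈ Finset.Ico 1 r, c l • ((1 : Module.End ℂ W) - (zmat j) ^ l))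
    (hphi : ∀ j, phi j v = ((r : ℂ) * (cont j : ℂ)) • v)
    (hzeta : ∀ j, zmat j v = ζ ^ (beta j) • v)
    (hcont : ∑ j, cont j = ∑ k ∈ Finset.range r, contentSum (lam k))
    (hbe : ∀ k < r, (Finset.univ.filter (fun j => beta j = k)).card = (lam k).sum) :
    Z v = ((r : ℂ) * (n.choose 2 : ℂ) * c0 + (n : ℂ) * d 0
      - ((∑ k ∈ Finset.range r, (contentSum (lam k) : ℂ)) * (r : ℂ) * c0
         + ∑ k ∈ Finset.range r, ((lam k).sum : ℂ) * d k)) • v := by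
  have hpow : ∀ (j : Fin n) (l : ℕ), ((zmat j) ^ l) v = (ζ ^ (l * beta j)) • v := by
    intro j l
    induction l with
    | zero => simp
    | succ m ih =>
      rw [pow_succ, Module.End.mul_apply, hzeta, map_smul, ih, smul_smul,
        ← pow_add]
      ring_nf
  -- evaluate Z on v
  have hsum1 : (∑ j, phi j) v = ((r : ℂ) * (∑ j, (cont j : ℂ))) • v := by
    rw [LinearMap.sum_apply, Finset.mul_sum, Finset.sum_smul]
    exact Finset.sum_congr rfl fun j _ => hphi j
  have hterm : ∀ (j : Fin n),
      (∑ l ∈ Finset.Ico 1 r, c l • ((1 : Module.End ℂ W) - (zmat j) ^ l)) v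
        = (d 0 - d (beta j)) • v := by
    intro j
    rw [LinearMap.sum_apply]
    have : ∀ l ∈ Finset.Ico 1 r,
        (c l • ((1 : Module.End ℂ W) - (zmat j) ^ l)) v
          = (c l * (1 - ζ ^ (l * beta j))) • v := by
      intro l _
      rw [LinearMap.smul_apply, LinearMap.sub_apply, Module.End.one_apply, hpow,
        mul_smul, sub_smul, one_smul, smul_sub]
    rw [Finset.sum_congr rfl this, ← Finset.sum_smul, hd 0, hd (beta j),
      ← Finset.sum_sub_distrib]
    congr 1
    refine Finset.sum_congr rfl fun l _ => ?_
    ring_nf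
  have hfib : ∑ j, d (beta j) = ∑ k ∈ Finset.range r, ((lam k).sum : ℂ) * d k := by
    rw [← Finset.sum_fiberwise_of_maps_to (g := beta) (t := Finset.range r)
      (fun j _ => Finset.mem_range.mpr (hbeta j))]
    refine Finset.sum_congr rfl fun k hk => ?_
    have : ∀ j ∈ Finset.univ.filter (fun j => beta j = k), d (beta j) = d k := by
      intro j hj
      rw [(Finset.mem_filter.mp hj).2]
    rw [Finset.sum_congr rfl this, Finset.sum_const, hbe k (Finset.mem_range.mp hk),
      nsmul_eq_mul]
  have hc : (∑ j, (cont j : ℂ)) = ∑ k ∈ Finset.range r, (contentSum (lam k) : ℂ) := by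
    exact_mod_cast hcont
  rw [hZ]
  rw [LinearMap.add_apply, LinearMap.sub_apply, LinearMap.smul_apply,
    Module.End.one_apply, LinearMap.smul_apply, hsum1, LinearMap.sum_apply,
    Finset.sum_congr rfl fun j _ => hterm j]
  rw [← Finset.sum_smul, Finset.sum_sub_distrib, Finset.sum_const, Finset.card_univ,
    Fintype.card_fin, nsmul_eq_mul, hfib, smul_smul, hc]
  rw [← sub_smul, ← add_smul]
  congr 1
  ring
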